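/- For each n ≥ 1, the polynomial A_n(x) = Σ_{j=0}^{n} JS_γ(n,j) x^j (with γ > 0 a fixed real number) has only real, simple, non-positive zeros, and A_n(0) = 0; consequently A_n satisfies the recurrence A_n(x) = x(A_{n-1}(x) + 2γ A'_{n-1}(x) + x A''_{n-1}(x)). -/

import Mathlib

/-- Jacobi-Stirling numbers of the second kind, defined by the triangular
recurrence and initial conditions. -/
def JS (γ : ℝ) : ℕ → ℕ → ℝ
  | 0, 0 => 1
  | _ + 1, 0 => 0
  | 0, _ + 1 => 0
  | n + 1, j + 1 => JS γ n j + ((j : ℝ) + 1) * (((j : ℝ) + 1) + 2 * γ - 1) * JS γ n (j + 1)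

/-- The horizontal generating polynomial `A_n(x) = Σ_{j=0}^{n} JS_γ(n,j) x^j`. -/
noncomputable def A (γ : ℝ) (n : ℕ) : Polynomial ℝ :=
  ∑ j ∈ Finset.range (n + 1), Polynomial.C (JS γ n j) * Polynomial.X ^ j

open Polynomial Finset

lemma JS_eq_zero (γ : ℝ) : ∀ n j, n < j → JS γ n j = 0 := by
  intro n
  induction n with
  | zero =>
    intro j hj
    match j, hj with
    | j + 1, _ => simp [JS]
  | succ n ih =>
    intro j hj
    match j, hj with
    | j + 1, hj =>
      have h1 : JS γ n j = 0 := ih j (by omega)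
      have h2 : JS γ n (j + 1) = 0 := ih (j + 1) (by omega)
      simp [JS, h1, h2]

lemma coeff_A (γ : ℝ) (n j : ℕ) : (A γ n).coeff j = JS γ n j := by
  unfold A
  rw [finset_sum_coeff]
  simp only [coeff_C_mul, coeff_X_pow]
  rcases le_or_gt j n with h | h
  · rw [Finset.sum_eq_single j]
    · simp
    · intro b _ hbj
      simp [Ne.symm hbj]
    · intro hj
      exact absurd (Finset.mem_range.mpr (by omega)) (fun hh => hj hh)
  · rw [Finset.sum_eq_zero, JS_eq_zero γ n j h]
    intro b hb
    have : b ≠ j := by have := Finset.mem_range.mp hb; omega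
    simp [Ne.symm this]

lemma A_rec (γ : ℝ) (n : ℕ) :
    A γ (n + 1) = X * (A γ n + C (2 * γ) * derivative (A γ n) +
      X * derivative (derivative (A γ n))) := by
  ext j
  rcases j with _ | j
  · simp [coeff_A, JS]
  · rw [coeff_X_mul, coeff_A]
    simp only [coeff_add, coeff_C_mul, coeff_derivative]
    rcases j with _ | k
    · have h0 : (X * derivative (derivative (A γ n))).coeff 0 = 0 := by
        simp [mul_coeff_zero]
      rw [h0, coeff_A, coeff_A]
      show JS γ (n + 1) 1 = _
      simp [JS]
    · rw [coeff_X_mul, coeff_derivative, coeff_derivative, coeff_A, coeff_A]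
      show JS γ (n + 1) (k + 1 + 1) = _
      rw [show JS γ (n+1) (k+1+1) = JS γ n (k+1) + ((k:ℝ)+1+1) * (((k:ℝ)+1+1) + 2*γ - 1) * JS γ n (k+1+1) from by simp [JS]]
      push_cast
      ring

lemma neg_prod_pos (k : ℕ) (g : ℕ → ℝ) (hneg : ∀ j < k, g j < 0) :
    0 < (-1 : ℝ) ^ k * ∏ j ∈ range k, g j := by
  have h : ∏ j ∈ range k, (-g j) = (-1 : ℝ) ^ k * ∏ j ∈ range k, g j := by
    calc ∏ j ∈ range k, (-g j) = ∏ j ∈ range k, ((-1) * g j) := by simp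
    _ = (∏ _j ∈ range k, (-1 : ℝ)) * ∏ j ∈ range k, g j := Finset.prod_mul_distrib
    _ = (-1 : ℝ) ^ k * ∏ j ∈ range k, g j := by rw [Finset.prod_const, card_range]
  rw [← h]
  exact Finset.prod_pos fun j hj => neg_pos.mpr (hneg j (Finset.mem_range.mp hj))

lemma sign_prod_split (m k : ℕ) (hk : k ≤ m) (g : ℕ → ℝ)
    (hneg : ∀ j < k, g j < 0) (hpos : ∀ j, k ≤ j → j < m → 0 < g j) :
    0 < (-1 : ℝ) ^ k * ∏ j ∈ range m, g j := by
  rw [← Finset.prod_range_mul_prod_Ico g hk, ← mul_assoc]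
  apply mul_pos (neg_prod_pos k g hneg)
  exact Finset.prod_pos fun j hj => by
    have := Finset.mem_Ico.mp hj; exact hpos j this.1 this.2

lemma sign_prod_erase (m i : ℕ) (him : i < m) (g : ℕ → ℝ)
    (hneg : ∀ j < i, g j < 0) (hpos : ∀ j, i < j → j < m → 0 < g j) :
    0 < (-1 : ℝ) ^ i * ∏ j ∈ (range m).erase i, g j := by
  have hset : (range m).erase i = range i ∪ Ico (i + 1) m := by
    ext a
    simp only [Finset.mem_erase, Finset.mem_range, Finset.mem_union, Finset.mem_Ico]
    omega
  have hdisj : Disjoint (range i) (Ico (i + 1) m) := by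
    rw [Finset.disjoint_left]
    intro a ha hb
    have := Finset.mem_range.mp ha
    have := Finset.mem_Ico.mp hb
    omega
  rw [hset, Finset.prod_union hdisj, ← mul_assoc]
  apply mul_pos (neg_prod_pos i g hneg)
  exact Finset.prod_pos fun j hj => by
    have := Finset.mem_Ico.mp hj; exact hpos j this.1 this.2

lemma eq_C_mul_prod (p : Polynomial ℝ) (m : ℕ) (c : ℝ) (hc : c ≠ 0) (r : ℕ → ℝ)
    (hdeg : p.natDegree ≤ m) (hcoeff : p.coeff m = c)
    (hr : ∀ i j, i < j → j < m → r j < r i)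
    (hroot : ∀ i < m, p.eval (r i) = 0) :
    p = C c * ∏ i ∈ range m, (X - C (r i)) := by
  set g : Polynomial ℝ := C c * ∏ i ∈ range m, (X - C (r i)) with hg
  have hprodmonic : (∏ i ∈ range m, (X - C (r i))).Monic :=
    monic_prod_of_monic _ _ fun i _ => monic_X_sub_C _
  have hproddeg : (∏ i ∈ range m, (X - C (r i))).natDegree = m := by
    rw [natDegree_prod_of_monic _ _ fun i _ => monic_X_sub_C _]
    simp [natDegree_X_sub_C]
  have hgdeg : g.natDegree ≤ m := by
    rw [hg]
    exact (natDegree_C_mul_le _ _).trans (le_of_eq hproddeg)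
  have hgcoeff : g.coeff m = c := by
    have hcn := hprodmonic.coeff_natDegree
    rw [hproddeg] at hcn
    rw [hg, coeff_C_mul, hcn, mul_one]
  have hinj : ∀ i j, i < m → j < m → i ≠ j → r i ≠ r j := by
    intro i j hi hj hij
    rcases lt_or_gt_of_ne hij with h | h
    · exact ne_of_gt (hr i j h hj)
    · exact ne_of_lt (hr j i h hi)
  have hq : p - g = 0 := by
    by_contra hq0
    have hqdeg : (p - g).natDegree ≤ m := le_trans (natDegree_sub_le _ _) (by omega)
    have hqm : (p - g).coeff m = 0 := by
      rw [coeff_sub, hcoeff, hgcoeff, sub_self]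
    have hne : (p - g).natDegree ≠ m := by
      intro h
      apply hq0
      rw [← leadingCoeff_eq_zero, leadingCoeff, h, hqm]
    have hltm : (p - g).natDegree < m := lt_of_le_of_ne hqdeg hne
    have hroots : ∀ i < m, r i ∈ (p - g).roots := by
      intro i hi
      rw [mem_roots hq0]
      show (p - g).eval (r i) = 0
      rw [eval_sub, hroot i hi, hg, eval_mul, eval_prod]
      have : ∏ j ∈ range m, (r i - r j) = 0 :=
        Finset.prod_eq_zero (Finset.mem_range.mpr hi) (by simp)
      simp [this]
    have hcard : m ≤ (p - g).natDegree := by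
      have hsub : Finset.image r (range m) ⊆ (p - g).roots.toFinset := by
        intro x hx
        rw [Finset.mem_image] at hx
        obtain ⟨i, hi, rfl⟩ := hx
        exact Multiset.mem_toFinset.mpr (hroots i (Finset.mem_range.mp hi))
      calc m = (Finset.image r (range m)).card := by
              rw [Finset.card_image_of_injOn, card_range]
              intro i hi j hj hij
              by_contra hne
              exact hinj i j (Finset.mem_range.mp hi) (Finset.mem_range.mp hj) hne hij
        _ ≤ (p - g).roots.toFinset.card := Finset.card_le_card hsub
        _ ≤ Multiset.card (p - g).roots := Multiset.toFinset_card_le _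
        _ ≤ (p - g).natDegree := card_roots' _
    omega
  exact sub_eq_zero.mp hq

lemma deriv_prod_eval (u : Finset ℕ) (s : ℕ → ℝ) (i : ℕ) (hi : i ∈ u) :
    (derivative (∏ j ∈ u, (X - C (s j)))).eval (s i) = ∏ j ∈ u.erase i, (s i - s j) := by
  rw [← Finset.mul_prod_erase u _ hi, derivative_mul, derivative_sub, derivative_X,
    derivative_C, sub_zero, one_mul, eval_add, eval_mul, eval_sub, eval_X, eval_C,
    sub_self, zero_mul, add_zero, eval_prod]
  simp

open Filter in
lemma step (γ : ℝ) (hγ : 0 < γ) (M : ℕ) (hM : 1 ≤ M) (s : ℕ → ℝ)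
    (hs : ∀ i j, i < j → j < M → s j < s i) (h0 : s 0 = 0) :
    ∃ r : ℕ → ℝ, (∀ i j, i < j → j < M → r j < r i) ∧ (∀ i < M, r i < 0) ∧
      ((∏ i ∈ range M, (X - C (s i))) +
        C (2 * γ) * derivative (∏ i ∈ range M, (X - C (s i))) +
        X * derivative (derivative (∏ i ∈ range M, (X - C (s i))))
        = ∏ i ∈ range M, (X - C (r i))) := by
  set f : Polynomial ℝ := ∏ i ∈ range M, (X - C (s i)) with hf
  have hMpos : (0 : ℝ) < (M : ℝ) := by exact_mod_cast hM
  have hmono : f.Monic := monic_prod_of_monic _ _ fun i _ => monic_X_sub_C _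
  have hfdeg : f.natDegree = M := by
    rw [hf, natDegree_prod_of_monic _ _ fun i _ => monic_X_sub_C _]
    simp [natDegree_X_sub_C]
  have hfeval : ∀ x, f.eval x = ∏ i ∈ range M, (x - s i) := fun x => by
    rw [hf, eval_prod]; simp
  have hfr : ∀ j < M, f.eval (s j) = 0 := fun j hj => by
    rw [hfeval]; exact Finset.prod_eq_zero (Finset.mem_range.mpr hj) (by simp)
  have hsle : ∀ i j, i ≤ j → j < M → s j ≤ s i := by
    intro i j hij hj
    rcases eq_or_lt_of_le hij with rfl | hlt
    · exact le_rfl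
    · exact (hs _ _ hlt hj).le
  -- Rolle : critical points between consecutive roots
  have hrolle : ∀ i, i + 1 < M → ∃ c, (s (i + 1) < c ∧ c < s i) ∧
      (derivative f).eval c = 0 := by
    intro i hi
    obtain ⟨c, hc, hc0⟩ := exists_deriv_eq_zero (f := fun x => f.eval x)
      (hs i (i + 1) (lt_add_one i) hi) f.continuous.continuousOn
      (by show f.eval _ = f.eval _; rw [hfr (i + 1) hi, hfr i (by omega)])
    rw [Polynomial.deriv] at hc0
    exact ⟨c, ⟨hc.1, hc.2⟩, hc0⟩
  let t : ℕ → ℝ := fun i => if h : i + 1 < M then Classical.choose (hrolle i h) else 0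
  have ht : ∀ i, i + 1 < M → ((s (i + 1) < t i ∧ t i < s i) ∧
      (derivative f).eval (t i) = 0) := by
    intro i h
    simp only [t]
    rw [dif_pos h]
    exact Classical.choose_spec (hrolle i h)
  have htanti : ∀ i j, i < j → j < M - 1 → t j < t i := by
    intro i j hij hj
    have h1 : j + 1 < M := by omega
    have h2 : i + 1 < M := by omega
    calc t j < s j := (ht j h1).1.2
    _ ≤ s (i + 1) := hsle _ _ (by omega) (by omega)
    _ < t i := (ht i h2).1.1
  have htneg : ∀ i, i + 1 < M → t i < 0 := by
    intro i h
    have := hsle 0 i (Nat.zero_le i) (by omega)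
    rw [h0] at this
    linarith [(ht i h).1.2]
  -- factor the derivative
  have hcM : f.coeff M = 1 := by rw [← hfdeg]; exact hmono.coeff_natDegree
  have hM1 : M - 1 + 1 = M := by omega
  have hf'coeff : (derivative f).coeff (M - 1) = (M : ℝ) := by
    rw [coeff_derivative, hM1, hcM, one_mul]
    exact_mod_cast congrArg (Nat.cast : ℕ → ℝ) hM1
  have hf'fact : derivative f = C (M : ℝ) * ∏ i ∈ range (M - 1), (X - C (t i)) := by
    apply eq_C_mul_prod _ _ _ (ne_of_gt hMpos) t
    · have := natDegree_derivative_le f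
      rw [hfdeg] at this
      exact this
    · exact hf'coeff
    · exact htanti
    · intro i hi
      exact (ht i (by omega)).2
  have hf'0 : 0 < (derivative f).eval 0 := by
    rw [hf'fact, eval_mul, eval_C, eval_prod]
    apply mul_pos hMpos
    apply Finset.prod_pos
    intro i hi
    have hi' := Finset.mem_range.mp hi
    have := htneg i (by omega)
    simp only [eval_sub, eval_X, eval_C]
    linarith
  have hf''_eval : ∀ i, i + 1 < M → (derivative (derivative f)).eval (t i)
      = (M : ℝ) * ∏ j ∈ (range (M - 1)).erase i, (t i - t j) := by
    intro i hi
    rw [hf'fact, derivative_C_mul, eval_mul, eval_C,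
      deriv_prod_eval (range (M - 1)) t i (Finset.mem_range.mpr (by omega))]
  -- sign facts
  have hsignf : ∀ i, i + 1 < M → 0 < (-1 : ℝ) ^ (i + 1) * f.eval (t i) := by
    intro i hi
    rw [hfeval]
    apply sign_prod_split M (i + 1) (by omega)
    · intro j hj
      have h1 : s i ≤ s j := hsle j i (by omega) (by omega)
      have := (ht i hi).1.2
      linarith
    · intro j hj1 hj2
      have h1 : s j ≤ s (i + 1) := hsle (i + 1) j hj1 hj2
      have := (ht i hi).1.1
      linarith
  have hsignf'' : ∀ i, i + 1 < M →
      0 < (-1 : ℝ) ^ i * (derivative (derivative f)).eval (t i) := by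
    intro i hi
    rw [hf''_eval i hi]
    have h1 : 0 < (-1 : ℝ) ^ i * ∏ j ∈ (range (M - 1)).erase i, (t i - t j) := by
      apply sign_prod_erase (M - 1) i (by omega)
      · intro j hj
        have := htanti j i hj (by omega)
        linarith
      · intro j hj1 hj2
        have := htanti i j hj1 hj2
        linarith
    calc (0 : ℝ) < (M : ℝ) * ((-1 : ℝ) ^ i * ∏ j ∈ (range (M - 1)).erase i, (t i - t j)) :=
          mul_pos hMpos h1
    _ = (-1 : ℝ) ^ i * ((M : ℝ) * ∏ j ∈ (range (M - 1)).erase i, (t i - t j)) := by ring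
  set h : Polynomial ℝ := f + C (2 * γ) * derivative f +
    X * derivative (derivative f) with hh
  have hheval : ∀ x, h.eval x = f.eval x + 2 * γ * (derivative f).eval x +
      x * (derivative (derivative f)).eval x := by
    intro x
    simp [hh]
  have hh0 : 0 < h.eval 0 := by
    have hf0 : f.eval 0 = 0 := by have := hfr 0 (by omega); rwa [h0] at this
    rw [hheval, hf0, zero_mul, zero_add, add_zero]
    have : (0:ℝ) < 2 * γ := by linarith
    nlinarith [hf'0]
  have hsignh : ∀ i, i + 1 < M → 0 < (-1 : ℝ) ^ (i + 1) * h.eval (t i) := by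
    intro i hi
    have e2 := (ht i hi).2
    rw [hheval, e2, mul_zero, add_zero]
    have h1 := hsignf i hi
    have h2 := hsignf'' i hi
    have h3 := htneg i hi
    rw [pow_succ] at h1 ⊢
    nlinarith [mul_pos h2 (neg_pos.mpr h3)]
  -- degree facts for h
  have hhcoeff : h.coeff M = 1 := by
    have c1 : (C (2 * γ) * derivative f).coeff M = 0 := by
      apply coeff_eq_zero_of_natDegree_lt
      calc (C (2 * γ) * derivative f).natDegree ≤ (derivative f).natDegree :=
            natDegree_C_mul_le _ _
      _ ≤ f.natDegree - 1 := natDegree_derivative_le f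
      _ < M := by omega
    have c2 : (X * derivative (derivative f)).coeff M = 0 := by
      rcases Nat.lt_or_ge M 2 with hM2 | hM2
      · have hf' : (derivative f).natDegree = 0 := by
          have := natDegree_derivative_le f
          omega
        have hzero : derivative (derivative f) = 0 := by
          rw [Polynomial.eq_C_of_natDegree_eq_zero hf']
          exact derivative_C
        rw [hzero, mul_zero, coeff_zero]
      · apply coeff_eq_zero_of_natDegree_lt
        calc (X * derivative (derivative f)).natDegree ≤
              X.natDegree + (derivative (derivative f)).natDegree := natDegree_mul_le
        _ ≤ 1 + (f.natDegree - 1 - 1) := by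
              have h1 : (derivative (derivative f)).natDegree ≤ (derivative f).natDegree - 1 :=
                natDegree_derivative_le _
              have h2 : (derivative f).natDegree ≤ f.natDegree - 1 := natDegree_derivative_le f
              have h3 : (X : Polynomial ℝ).natDegree = 1 := natDegree_X
              omega
        _ < M := by omega
    rw [hh, coeff_add, coeff_add, c1, c2, hcM, add_zero, add_zero]
  have hhdeg : h.natDegree = M := by
    apply le_antisymm
    · rw [hh]
      apply (natDegree_add_le _ _).trans
      apply max_le
      · apply (natDegree_add_le _ _).trans
        apply max_le (by omega)
        calc (C (2 * γ) * derivative f).natDegree ≤ (derivative f).natDegree :=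
              natDegree_C_mul_le _ _
        _ ≤ f.natDegree - 1 := natDegree_derivative_le f
        _ ≤ M := by omega
      · calc (X * derivative (derivative f)).natDegree ≤
              X.natDegree + (derivative (derivative f)).natDegree := natDegree_mul_le
        _ ≤ M := by
              have h1 : (derivative (derivative f)).natDegree ≤ (derivative f).natDegree - 1 :=
                natDegree_derivative_le _
              have h2 : (derivative f).natDegree ≤ f.natDegree - 1 := natDegree_derivative_le f
              have h3 : (X : Polynomial ℝ).natDegree = 1 := natDegree_X
              omega
    · exact le_natDegree_of_ne_zero (by rw [hhcoeff]; exact one_ne_zero)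
  -- behavior at -infinity
  have hfar : ∀ B : ℝ, ∃ w, w < B ∧ 0 < (-1 : ℝ) ^ M * h.eval w := by
    intro B
    set P : Polynomial ℝ := C ((-1 : ℝ) ^ M) * h.comp (-X) with hP
    have hPeval : ∀ x, P.eval x = (-1 : ℝ) ^ M * h.eval (-x) := by
      intro x
      simp [hP, eval_comp]
    have hhne : h ≠ 0 := fun hz => by simp [hz] at hhcoeff
    have hXdeg : (-X : Polynomial ℝ).natDegree = 1 := by
      rw [natDegree_neg, natDegree_X]
    have hcompLC : (h.comp (-X)).leadingCoeff = (-1 : ℝ) ^ M := by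
      rw [leadingCoeff_comp (by rw [hXdeg]; exact one_ne_zero)]
      have hLCh : h.leadingCoeff = 1 := by
        rw [leadingCoeff, hhdeg, hhcoeff]
      rw [hLCh, one_mul, hhdeg]
      rw [leadingCoeff_neg, leadingCoeff_X]
    have hPLC : P.leadingCoeff = 1 := by
      rw [hP, leadingCoeff_mul, leadingCoeff_C, hcompLC, ← pow_add]
      exact Even.neg_one_pow ⟨M, rfl⟩
    have hPne : P ≠ 0 := fun hz => by simp [hz] at hPLC
    have hPdeg : 0 < P.degree := by
      rw [degree_eq_natDegree hPne]
      have : P.natDegree = M := by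
        rw [hP, natDegree_C_mul (pow_ne_zero _ (by norm_num : (-1:ℝ) ≠ 0)), natDegree_comp, hhdeg, hXdeg, mul_one]
      rw [this]
      exact_mod_cast hM
    have htends := P.tendsto_atTop_of_leadingCoeff_nonneg hPdeg (by rw [hPLC]; norm_num)
    obtain ⟨z, hz0, hzB⟩ := ((htends.eventually_gt_atTop 0).and (eventually_gt_atTop (-B))).exists
    refine ⟨-z, by linarith, ?_⟩
    rw [← hPeval]
    exact hz0
  -- the chain of points with alternating signs
  set u : ℕ → ℝ := fun k => if k = 0 then 0 else t (k - 1) with hu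
  have usign : ∀ k ≤ M - 1, 0 < (-1 : ℝ) ^ k * h.eval (u k) := by
    intro k hk
    rcases k with _ | k
    · simpa [hu] using hh0
    · have hk1 : k + 1 < M := by omega
      have := hsignh k hk1
      simpa [hu] using this
  have udec : ∀ k, k + 1 ≤ M - 1 → u (k + 1) < u k := by
    intro k hk
    rcases k with _ | k
    · have h1 : 0 + 1 < M := by omega
      have := (ht 0 h1).1.2
      have hs0 : s 0 = 0 := h0
      simp only [hu]
      norm_num
      linarith
    · have : t (k + 1) < t k := htanti k (k + 1) (lt_add_one k) (by omega)
      simp only [hu]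
      norm_num
      exact this
  obtain ⟨w, hw1, hw2⟩ := hfar (u (M - 1))
  set v : ℕ → ℝ := fun k => if k ≤ M - 1 then u k else w with hv
  have vsign : ∀ k ≤ M, 0 < (-1 : ℝ) ^ k * h.eval (v k) := by
    intro k hk
    rcases le_or_gt k (M - 1) with h1 | h1
    · simp only [hv, if_pos h1]
      exact usign k h1
    · have hkM : k = M := by omega
      simp only [hv, if_neg (by omega : ¬ k ≤ M - 1)]
      rw [hkM]
      exact hw2
  have vdec : ∀ k, k + 1 ≤ M → v (k + 1) < v k := by
    intro k hk
    rcases le_or_gt (k + 1) (M - 1) with h1 | h1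
    · simp only [hv, if_pos h1, if_pos (by omega : k ≤ M - 1)]
      exact udec k h1
    · have hk1 : k + 1 = M := by omega
      have hkk : k = M - 1 := by omega
      simp only [hv, if_neg (by omega : ¬ k + 1 ≤ M - 1), if_pos (by omega : k ≤ M - 1)]
      rw [hkk]
      exact hw1
  have vmono : ∀ a b, a ≤ b → b ≤ M → v b ≤ v a := by
    intro a b hab hbM
    induction b with
    | zero => simp [Nat.le_zero.mp hab]
    | succ b ih =>
      rcases eq_or_lt_of_le hab with rfl | hlt
      · exact le_rfl
      · exact le_trans (vdec b hbM).le (ih (by omega) (by omega))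
  -- intermediate value theorem
  have hivt : ∀ k, k + 1 ≤ M → ∃ ρ, (v (k + 1) < ρ ∧ ρ < v k) ∧ h.eval ρ = 0 := by
    intro k hk
    have ha := vsign (k + 1) (by omega)
    have hb := vsign k (by omega)
    have hab : v (k + 1) < v k := vdec k hk
    have hcont : ContinuousOn (fun x => h.eval x) (Set.Icc (v (k + 1)) (v k)) :=
      h.continuous.continuousOn
    rcases Nat.even_or_odd k with he | ho
    · rw [he.neg_one_pow, one_mul] at hb
      rw [pow_succ, he.neg_one_pow, one_mul, neg_one_mul] at ha
      have ha' : h.eval (v (k + 1)) < 0 := by linarith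
      have := intermediate_value_Ioo hab.le hcont (Set.mem_Ioo.mpr ⟨ha', hb⟩)
      obtain ⟨ρ, hρmem, hρ⟩ := this
      exact ⟨ρ, ⟨hρmem.1, hρmem.2⟩, hρ⟩
    · have hoe : Odd k := ho
      rw [hoe.neg_one_pow, neg_one_mul] at hb
      have hb' : h.eval (v k) < 0 := by linarith
      have hae : Even (k + 1) := Odd.add_one ho
      rw [hae.neg_one_pow, one_mul] at ha
      have := intermediate_value_Ioo' hab.le hcont (Set.mem_Ioo.mpr ⟨hb', ha⟩)
      obtain ⟨ρ, hρmem, hρ⟩ := this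
      exact ⟨ρ, ⟨hρmem.1, hρmem.2⟩, hρ⟩
  let r : ℕ → ℝ := fun k => if hk : k + 1 ≤ M then Classical.choose (hivt k hk) else 0
  have hr : ∀ k, k + 1 ≤ M → (v (k + 1) < r k ∧ r k < v k) ∧ h.eval (r k) = 0 := by
    intro k hk
    simp only [r]
    rw [dif_pos hk]
    exact Classical.choose_spec (hivt k hk)
  have hranti : ∀ i j, i < j → j < M → r j < r i := by
    intro i j hij hj
    have hj1 : j + 1 ≤ M := by omega
    have hi1 : i + 1 ≤ M := by omega
    calc r j < v j := (hr j hj1).1.2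
    _ ≤ v (i + 1) := vmono (i + 1) j (by omega) (by omega)
    _ < r i := (hr i hi1).1.1
  have hrneg : ∀ i < M, r i < 0 := by
    intro i hi
    have hi1 : i + 1 ≤ M := by omega
    have h1 : r i < v i := (hr i hi1).1.2
    have h2 : v i ≤ v 0 := vmono 0 i (Nat.zero_le i) (by omega)
    have h3 : v 0 = 0 := by simp [hv, hu]
    linarith
  refine ⟨r, hranti, hrneg, ?_⟩
  have := eq_C_mul_prod h M 1 one_ne_zero r (le_of_eq hhdeg) hhcoeff hranti
    (fun i hi => (hr i (by omega)).2)
  rw [map_one, one_mul] at this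
  exact this

lemma A_invariant (γ : ℝ) (hγ : 0 < γ) : ∀ n, 1 ≤ n → ∃ s : ℕ → ℝ,
    (∀ i j, i < j → j < n → s j < s i) ∧ s 0 = 0 ∧
    A γ n = ∏ i ∈ range n, (X - C (s i)) := by
  intro n
  induction n with
  | zero => omega
  | succ n ih =>
    intro _
    rcases Nat.eq_or_lt_of_le (Nat.one_le_iff_ne_zero.mpr (Nat.succ_ne_zero n)) with h1 | h1
    · -- n + 1 = 1
      have hn0 : n = 0 := by omega
      subst hn0
      refine ⟨fun _ => 0, by omega, rfl, ?_⟩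
      have : A γ 1 = X := by
        unfold A
        rw [Finset.sum_range_succ, Finset.sum_range_one]
        simp [JS]
      rw [this, Finset.prod_range_one]
      simp
    · -- n ≥ 1
      have hn : 1 ≤ n := by omega
      obtain ⟨s, hanti, hs0, hAeq⟩ := ih hn
      obtain ⟨r, hranti, hrneg, hreq⟩ := step γ hγ n hn s hanti hs0
      refine ⟨fun k => if k = 0 then 0 else r (k - 1), ?_, by simp, ?_⟩
      · intro i j hij hj
        rcases Nat.eq_zero_or_pos i with rfl | hi0
        · simp only [if_pos rfl, if_neg (by omega : ¬ j = 0)]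
          exact hrneg (j - 1) (by omega)
        · simp only [if_neg (by omega : ¬ i = 0), if_neg (by omega : ¬ j = 0)]
          exact hranti (i - 1) (j - 1) (by omega) (by omega)
      · rw [A_rec γ n, hAeq, hreq, Finset.prod_range_succ']
        simp [mul_comm]

/-- For `γ > 0` and `n ≥ 1`, the polynomial `A_n` has only real (it splits over `ℝ`),
simple, non-positive zeros, `A_n(0) = 0`, and `A_n` satisfies the recurrence
`A_n(x) = x (A_{n-1}(x) + 2γ A'_{n-1}(x) + x A''_{n-1}(x))`. -/
theorem A_zeros (γ : ℝ) (hγ : 0 < γ) (n : ℕ) (hn : 1 ≤ n) :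
    Polynomial.Splits ((A γ n).map (RingHom.id ℝ)) ∧
    (A γ n).roots.Nodup ∧
    (∀ x ∈ (A γ n).roots, x ≤ 0) ∧
    (A γ n).eval 0 = 0 ∧
    A γ n = Polynomial.X * (A γ (n - 1) +
      Polynomial.C (2 * γ) * Polynomial.derivative (A γ (n - 1)) +
      Polynomial.X * Polynomial.derivative (Polynomial.derivative (A γ (n - 1)))) := by
  obtain ⟨s, hanti, hs0, hAeq⟩ := A_invariant γ hγ n hn
  have hsle : ∀ i < n, s i ≤ 0 := by
    intro i hi
    rcases Nat.eq_zero_or_pos i with rfl | hi0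
    · exact le_of_eq hs0
    · rw [← hs0]
      exact (hanti 0 i hi0 hi).le
  have hinj : Set.InjOn s (range n) := by
    intro i hi j hj hij
    by_contra hne
    rcases Nat.lt_or_ge i j with h | h
    · exact absurd hij (ne_of_gt (hanti i j h (Finset.mem_range.mp hj)))
    · have : j < i := by omega
      exact absurd hij (ne_of_lt (hanti j i this (Finset.mem_range.mp hi)))
  have himage : A γ n = ∏ a ∈ Finset.image s (range n), (X - C a) := by
    rw [hAeq, Finset.prod_image (fun i hi j hj hij => hinj hi hj hij)]
  have hroots : (A γ n).roots = (Finset.image s (range n)).val := by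
    rw [himage, roots_prod_X_sub_C]
  refine ⟨?_, ?_, ?_, ?_, ?_⟩
  · rw [map_id, himage]
    exact Splits.prod fun a _ => Splits.X_sub_C _
  · rw [hroots]
    exact (Finset.image s (range n)).nodup
  · intro x hx
    rw [hroots] at hx
    obtain ⟨i, hi, rfl⟩ := Finset.mem_image.mp (Finset.mem_val.mp hx)
    exact hsle i (Finset.mem_range.mp hi)
  · rw [hAeq, eval_prod]
    apply Finset.prod_eq_zero (Finset.mem_range.mpr (by omega : 0 < n))
    simp [hs0]
  · obtain ⟨m, rfl⟩ : ∃ m, n = m + 1 := ⟨n - 1, by omega⟩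
    rw [Nat.add_sub_cancel]
    exact A_rec γ m
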